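/- Fix parameters a, b, c, h, e in a field k of characteristic 0 and indices i < j. Define the operator T_{ij} = a·Id + (b·x_i + c·x_j + h + e·x_i x_j)·∂_{ij} on the polynomial ring k[x₁, ..., x_n], where ∂_{ij} is the divided difference (f − s_{ij}f)/(x_i − x_j). Then T_{ij}² = (2a + b − c)·T_{ij} − a(a + b − c)·Id. -/

import Mathlib

open MvPolynomial

/-- For `T_{ij} = a·Id + (b x_i + c x_j + h + e x_i x_j)·∂_{ij}` one has
`T_{ij}² = (2a + b − c)·T_{ij} − a(a + b − c)·Id`.  The divided differences are
encoded by witnesses `g₁ = ∂_{ij} f` and `g₂ = ∂_{ij}(T_{ij} f)`. -/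
theorem Tij_hecke_relation {k : Type*} [Field k] [CharZero k]
    (a b c h e : k) {n : ℕ} (i j : Fin n) (hij : i < j)
    (f g₁ Tf g₂ : MvPolynomial (Fin n) k)
    (hg₁ : (X i - X j) * g₁ = f - rename (Equiv.swap i j) f)
    (hTf : Tf = C a * f + (C b * X i + C c * X j + C h + C e * X i * X j) * g₁)
    (hg₂ : (X i - X j) * g₂ = Tf - rename (Equiv.swap i j) Tf) :
    C a * Tf + (C b * X i + C c * X j + C h + C e * X i * X j) * g₂
      = C (2 * a + b - c) * Tf - C (a * (a + b - c)) * f := by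
  have hne : (X i - X j : MvPolynomial (Fin n) k) ≠ 0 := by
    have : (X i : MvPolynomial (Fin n) k) ≠ X j :=
      fun hX => (Fin.ne_of_lt hij) (X_injective hX)
    exact sub_ne_zero.mpr this
  have hswap : ∀ p : MvPolynomial (Fin n) k,
      rename (Equiv.swap i j) (rename (Equiv.swap i j) p) = p := by
    intro p
    rw [rename_rename]
    have : (Equiv.swap i j) ∘ (Equiv.swap i j) = id := by
      funext x; simp [Equiv.swap_apply_self]
    rw [this, rename_id, AlgHom.id_apply]
  -- g₁ is symmetric
  have hg₁sym : rename (Equiv.swap i j) g₁ = g₁ := by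
    have h1 := congrArg (rename (Equiv.swap i j)) hg₁
    simp only [map_mul, map_sub, rename_X, Equiv.swap_apply_left,
      Equiv.swap_apply_right, hswap] at h1
    apply mul_left_cancel₀ hne
    rw [hg₁]
    linear_combination -h1
  -- compute rename of Tf
  have hσTf : rename (Equiv.swap i j) Tf =
      C a * rename (Equiv.swap i j) f
        + (C b * X j + C c * X i + C h + C e * X i * X j) * g₁ := by
    rw [hTf]
    simp only [map_add, map_mul, rename_C, rename_X, Equiv.swap_apply_left,
      Equiv.swap_apply_right, hg₁sym]
    ring
  have hg₂' : g₂ = C (a + b - c) * g₁ := by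
    apply mul_left_cancel₀ hne
    rw [hg₂, hσTf, hTf]
    simp only [map_add, map_sub]
    linear_combination (-C a : MvPolynomial (Fin n) k) * hg₁
  rw [hg₂', hTf]
  simp only [map_mul, map_add, map_sub, map_ofNat, C_mul, C_add, C_sub]
  ring
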